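/- arXiv:2002.04594 — 3 statements merged into one kernel-verified Lean document; each statement's English description precedes it below -/
import Mathlib

section
/- Let 𝔤 be a nilpotent real Lie algebra which is not abelian. Then 𝔤 admits no ad-invariant inner product: for every inner product ⟨·,·⟩ on 𝔤 there exist x, y, z ∈ 𝔤 with ⟨⁅x, y⁆, z⟩ ≠ −⟨y, ⁅x, z⁆⟩. -/
/-- (Wolf) A nilpotent real Lie algebra which is not abelian admits no ad-invariant inner
product: for every inner product `⟨·,·⟩` (a symmetric positive-definite bilinear form `B`)
there exist `x, y, z` with `⟨⁅x, y⁆, z⟩ ≠ −⟨y, ⁅x, z⁆⟩`. -/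
theorem nilpotent_nonabelian_no_adInvariant_inner_product
    {L : Type*} [LieRing L] [LieAlgebra ℝ L]
    [LieRing.IsNilpotent L]
    (hnab : ∃ x y : L, ⁅x, y⁆ ≠ 0)
    (B : L →ₗ[ℝ] L →ₗ[ℝ] ℝ)
    (hsymm : ∀ x y : L, B x y = B y x)
    (hpos : ∀ x : L, x ≠ 0 → 0 < B x x) :
    ∃ x y z : L, B ⁅x, y⁆ z ≠ -(B y ⁅x, z⁆) := by
  by_contra hcon
  push_neg at hcon
  obtain ⟨a, b, hab⟩ := hnab
  classical
  -- C¹ ≠ ⊥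
  have h1 : LieModule.lowerCentralSeries ℝ L L 1 ≠ ⊥ := by
    intro hbot
    apply hab
    have hm : ⁅a, b⁆ ∈ LieModule.lowerCentralSeries ℝ L L 1 := by
      rw [LieModule.lowerCentralSeries_succ]
      exact LieSubmodule.lie_mem_lie (LieSubmodule.mem_top a) (LieSubmodule.mem_top b)
    rw [hbot] at hm
    exact (LieSubmodule.mem_bot _).mp hm
  have hnil : ∃ n, LieModule.lowerCentralSeries ℝ L L n = ⊥ :=
    (LieModule.isNilpotent_iff ℝ L L).mp inferInstance
  set n := Nat.find hnil with hn
  have hnspec : LieModule.lowerCentralSeries ℝ L L n = ⊥ := Nat.find_spec hnil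
  have hn2 : 2 ≤ n := by
    rcases Nat.lt_or_ge n 2 with h | h
    · interval_cases n
      · exact absurd hnspec (by
          simp only [LieModule.lowerCentralSeries_zero]
          intro htop
          apply hab
          have : ⁅a, b⁆ ∈ (⊤ : LieSubmodule ℝ L L) := LieSubmodule.mem_top _
          rw [htop] at this
          exact (LieSubmodule.mem_bot _).mp this)
      · exact absurd hnspec h1
    · exact h
  set k := n - 1 with hk
  have hk1 : 1 ≤ k := by omega
  have hksucc : k + 1 = n := by omega
  have hCk : LieModule.lowerCentralSeries ℝ L L k ≠ ⊥ := Nat.find_min hnil (by omega)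
  have hCk1 : LieModule.lowerCentralSeries ℝ L L (k + 1) = ⊥ := by rw [hksucc]; exact hnspec
  -- get a nonzero w in Cᵏ
  have hw : ∃ w ∈ LieModule.lowerCentralSeries ℝ L L k, w ≠ 0 := by
    by_contra hno
    push_neg at hno
    exact hCk ((LieSubmodule.eq_bot_iff _).mpr hno)
  obtain ⟨w, hwmem, hwne⟩ := hw
  -- w is central
  have hcen : ∀ x : L, ⁅x, w⁆ = 0 := by
    intro x
    have hm : ⁅x, w⁆ ∈ LieModule.lowerCentralSeries ℝ L L (k + 1) := by
      rw [LieModule.lowerCentralSeries_succ]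
      exact LieSubmodule.lie_mem_lie (LieSubmodule.mem_top x) hwmem
    rw [hCk1] at hm
    exact (LieSubmodule.mem_bot _).mp hm
  -- B w w = 0
  have hspan : w ∈ Submodule.span ℝ
      { m : L | ∃ x ∈ (⊤ : LieIdeal ℝ L), ∃ y ∈ LieModule.lowerCentralSeries ℝ L L (k - 1), ⁅x, y⁆ = m } := by
    have : w ∈ LieModule.lowerCentralSeries ℝ L L ((k - 1) + 1) := by
      rwa [show (k - 1) + 1 = k by omega]
    rw [LieModule.lowerCentralSeries_succ] at this
    rwa [← LieSubmodule.lieIdeal_oper_eq_linear_span']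
  have key : ∀ v ∈ Submodule.span ℝ
      { m : L | ∃ x ∈ (⊤ : LieIdeal ℝ L),
          ∃ y ∈ LieModule.lowerCentralSeries ℝ L L (k - 1), ⁅x, y⁆ = m },
      B v w = 0 := by
    intro v hv
    refine Submodule.span_induction (p := fun v _ => B v w = 0) ?_ ?_ ?_ ?_ hv
    · rintro m ⟨x, -, y, -, rfl⟩
      rw [hcon x y w, hcen x, map_zero, neg_zero]
    · simp
    · intro u v _ _ hu hv
      rw [map_add, LinearMap.add_apply, hu, hv, add_zero]
    · intro c u _ hu
      rw [map_smul, LinearMap.smul_apply, hu, smul_zero]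
  have hBw : B w w = 0 := key w hspan
  exact absurd hBw (ne_of_gt (hpos w hwne))
end

section
/- Let 𝔤 be a finite-dimensional real Lie algebra with an inner product and an orthonormal basis (f_k)_{k ∈ ι} indexed by a finite type ι with a distinguished element 0. Define the structure constants α_{ab}^c = ⟨⁅f_a, f_b⁆, f_c⟩ and Milnor's expression A_{ab}^k = (1/2)·α_{ab}^k·(−α_{ab}^k + α_{bk}^a + α_{ka}^b) − (1/4)·(α_{ab}^k − α_{bk}^a + α_{ka}^b)·(α_{ab}^k + α_{bk}^a − α_{ka}^b) − α_{ka}^a·α_{kb}^b. Suppose there is a function ψ : ι → ℝ such that ⁅f₀, f_k⁆ = ψ(k) · f_k for every k ≠ 0, and suppose ⟨⁅f_a, f_b⁆, f₀⟩ = 0 for all a, b ≠ 0. Then for every m ≠ 0, the sum over all k ∈ ι of A_{0m}^k equals −ψ(m)². -/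
/-- The structure constants `α_{ab}^c = ⟨⁅f_a, f_b⁆, f_c⟩` of a Lie algebra relative to a
bilinear form `B` and a family of vectors `f`. -/
noncomputable def structConst {L : Type*} [LieRing L] [LieAlgebra ℝ L] {ι : Type*}
    (B : L →ₗ[ℝ] L →ₗ[ℝ] ℝ) (f : ι → L) (a b c : ι) : ℝ :=
  B ⁅f a, f b⁆ (f c)

/-- Milnor's curvature expression
`A_{ab}^k = ½ α_{ab}^k (−α_{ab}^k + α_{bk}^a + α_{ka}^b)
  − ¼ (α_{ab}^k − α_{bk}^a + α_{ka}^b)(α_{ab}^k + α_{bk}^a − α_{ka}^b) − α_{ka}^a α_{kb}^b`. -/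
noncomputable def milnorA {L : Type*} [LieRing L] [LieAlgebra ℝ L] {ι : Type*}
    (B : L →ₗ[ℝ] L →ₗ[ℝ] ℝ) (f : ι → L) (a b k : ι) : ℝ :=
  (1 / 2) * structConst B f a b k *
      (-(structConst B f a b k) + structConst B f b k a + structConst B f k a b)
    - (1 / 4) * (structConst B f a b k - structConst B f b k a + structConst B f k a b) *
        (structConst B f a b k + structConst B f b k a - structConst B f k a b)
    - structConst B f k a a * structConst B f k b b

/-- Milnor's formula applied to vertical planes: if `f` is an orthonormal basis with
distinguished element `0`, `⁅f₀, f_k⁆ = ψ(k) f_k` for `k ≠ 0`, and `⟨⁅f_a, f_b⁆, f₀⟩ = 0`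
for `a, b ≠ 0`, then for every `m ≠ 0` the sum `Σ_k A_{0m}^k` equals `−ψ(m)²` (the
sectional curvature of the vertical plane spanned by `f₀` and `f_m`). -/
theorem milnor_vertical_plane_curvature {L : Type*} [LieRing L] [LieAlgebra ℝ L]
    {ι : Type*} [Fintype ι] [DecidableEq ι] [Zero ι]
    (B : L →ₗ[ℝ] L →ₗ[ℝ] ℝ)
    (hsymm : ∀ x y : L, B x y = B y x)
    (f : Module.Basis ι ℝ L)
    (horth : ∀ a b : ι, B (f a) (f b) = if a = b then 1 else 0)
    (ψ : ι → ℝ)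
    (heig : ∀ k : ι, k ≠ 0 → ⁅f 0, f k⁆ = ψ k • f k)
    (hhoriz : ∀ a b : ι, a ≠ 0 → b ≠ 0 → B ⁅f a, f b⁆ (f 0) = 0) :
    ∀ m : ι, m ≠ 0 → ∑ k : ι, milnorA B (⇑f) 0 m k = -(ψ m) ^ 2 := by
  intro m hm
  have h1 : ∀ k : ι, structConst B (⇑f) 0 m k = if k = m then ψ m else 0 := by
    intro k
    simp only [structConst, heig m hm, map_smul, LinearMap.smul_apply, smul_eq_mul, horth]
    by_cases h : k = m
    · simp [h]
    · rw [if_neg (fun e => h e.symm), if_neg h, mul_zero]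
  have h2 : ∀ k : ι, structConst B (⇑f) m k 0 = 0 := by
    intro k
    by_cases h : k = 0
    · subst h
      have : ⁅f m, f (0:ι)⁆ = -(ψ m • f m) := by
        rw [← lie_skew, heig m hm]
      simp [structConst, this, horth, hm]
    · exact hhoriz m k hm h
  have h3 : ∀ k : ι, structConst B (⇑f) k 0 m = if k = m then -ψ m else 0 := by
    intro k
    by_cases h : k = 0
    · subst h
      have hne : (0:ι) ≠ m := fun e => hm e.symm
      simp [structConst, hne]
    · have : ⁅f k, f (0:ι)⁆ = -(ψ k • f k) := by
        rw [← lie_skew, heig k h]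
      simp only [structConst, this, map_neg, map_smul, LinearMap.neg_apply,
        LinearMap.smul_apply, smul_eq_mul, horth]
      by_cases hk : k = m <;> simp [hk]
  have h4 : ∀ k : ι, structConst B (⇑f) k 0 0 = 0 := by
    intro k
    by_cases h : k = 0
    · subst h; simp [structConst]
    · have : ⁅f k, f (0:ι)⁆ = -(ψ k • f k) := by
        rw [← lie_skew, heig k h]
      simp [structConst, this, horth, h]
  rw [Finset.sum_eq_single m]
  · simp only [milnorA, h1, h2, h3, h4, if_pos rfl, ite_true]
    ring
  · intro k _ hk
    simp only [milnorA, h1, h2, h3, h4, if_neg hk]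
    ring
  · intro h; exact absurd (Finset.mem_univ m) h
end

section
/- Let 𝔤 be a finite-dimensional real Lie algebra with an inner product and an orthonormal basis (f_k)_{k ∈ ι}, with structure constants α_{ab}^c = ⟨⁅f_a, f_b⁆, f_c⟩ and Milnor expression A_{ab}^k = (1/2)·α_{ab}^k·(−α_{ab}^k + α_{bk}^a + α_{ka}^b) − (1/4)·(α_{ab}^k − α_{bk}^a + α_{ka}^b)·(α_{ab}^k + α_{bk}^a − α_{ka}^b) − α_{ka}^a·α_{kb}^b. Suppose there is a layer function ψ : ι → ℕ with ψ(k) ≥ 1 for all k, such that α_{ab}^c = 0 whenever ψ(c) ≠ ψ(a) + ψ(b). Then for any distinct a, b with ψ(a) = ψ(b) = 1, the sum over all k ∈ ι of A_{ab}^k equals −(3/4)·‖⁅f_a, f_b⁆‖². -/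
/-- Milnor's formula applied to horizontal-layer planes: if `f` is an orthonormal basis
carrying a layer function `ψ ≥ 1` with `α_{ab}^c = 0` whenever `ψ(c) ≠ ψ(a) + ψ(b)`, then
for distinct `a, b` in the first layer (`ψ(a) = ψ(b) = 1`) the sum `Σ_k A_{ab}^k` equals
`−(3/4)·‖⁅f_a, f_b⁆‖²` (the nilpotent sectional curvature of the plane `⟨f_a, f_b⟩`). -/
theorem milnor_horizontal_plane_curvature {L : Type*} [LieRing L] [LieAlgebra ℝ L]
    {ι : Type*} [Fintype ι] [DecidableEq ι]
    (B : L →ₗ[ℝ] L →ₗ[ℝ] ℝ)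
    (hsymm : ∀ x y : L, B x y = B y x)
    (f : Module.Basis ι ℝ L)
    (horth : ∀ a b : ι, B (f a) (f b) = if a = b then 1 else 0)
    (ψ : ι → ℕ) (hψ : ∀ k : ι, 1 ≤ ψ k)
    (hlayer : ∀ a b c : ι, ψ c ≠ ψ a + ψ b → structConst B (⇑f) a b c = 0) :
    ∀ a b : ι, a ≠ b → ψ a = 1 → ψ b = 1 →
      ∑ k : ι, milnorA B (⇑f) a b k = -(3 / 4) * B ⁅f a, f b⁆ ⁅f a, f b⁆ := by

  intro a b hab ha hb
  -- vanishing of the off-diagonal structure constants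
  have h1 : ∀ k : ι, structConst B (⇑f) b k a = 0 := fun k =>
    hlayer b k a (by have := hψ k; omega)
  have h2 : ∀ k : ι, structConst B (⇑f) k a b = 0 := fun k =>
    hlayer k a b (by have := hψ k; omega)
  have h3 : ∀ k : ι, structConst B (⇑f) k a a = 0 := fun k =>
    hlayer k a a (by have := hψ k; omega)
  have hA : ∀ k : ι, milnorA B (⇑f) a b k = -(3/4) * (structConst B (⇑f) a b k)^2 := by
    intro k
    simp only [milnorA, h1, h2, h3]
    ring
  -- expansion of B v v in the orthonormal basis
  set v := ⁅f a, f b⁆ with hv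
  have hrep : ∀ x : L, ∀ c : ι, B x (f c) = f.repr x c := by
    intro x c
    conv_lhs => rw [← f.sum_repr x]
    simp only [map_sum, map_smul, LinearMap.sum_apply, LinearMap.smul_apply, horth,
      smul_eq_mul, mul_ite, mul_one, mul_zero]
    simp
  have hvv : B v v = ∑ k : ι, (structConst B (⇑f) a b k)^2 := by
    nth_rewrite 2 [← f.sum_repr v]
    rw [map_sum]
    refine Finset.sum_congr rfl fun k _ => ?_
    have hc : structConst B (⇑f) a b k = f.repr v k := hrep v k
    rw [map_smul, smul_eq_mul, ← hc]
    simp only [structConst]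
    ring
  rw [Finset.sum_congr rfl (fun k _ => hA k), ← Finset.mul_sum, hvv]
end
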